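/- For every r ∈ (0,1), 1 − (2/π)·arctan(2r/(1−r²)) ≤ (4/π)·arctan((1−r)/(2√r)). -/
import Mathlib

open scoped Real

/-- For every `r ∈ (0,1)`,
`1 − (2/π) arctan(2r/(1−r²)) ≤ (4/π) arctan((1−r)/(2√r))`. -/
theorem one_sub_arctan_le (r : ℝ) (hr : r ∈ Set.Ioo (0 : ℝ) 1) :
    1 - 2 / Real.pi * Real.arctan (2 * r / (1 - r ^ 2)) ≤
      4 / Real.pi * Real.arctan ((1 - r) / (2 * Real.sqrt r)) := by
  obtain ⟨hr0, hr1⟩ := hr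
  set u := Real.sqrt r with hu
  have hu0 : 0 < u := Real.sqrt_pos.mpr hr0
  have hu1 : u < 1 := by
    rw [hu, show (1:ℝ) = Real.sqrt 1 by simp]
    exact Real.sqrt_lt_sqrt (le_of_lt hr0) hr1
  have hru : r = u ^ 2 := by rw [hu, Real.sq_sqrt hr0.le]
  have hπ : (0:ℝ) < Real.pi := Real.pi_pos
  -- identity 1
  have ha : Real.arctan (2 * r / (1 - r ^ 2)) = 2 * Real.arctan r :=
    (Real.two_mul_arctan (by linarith) hr1).symm
  -- identity 2
  have hden : 0 < 1 - u ^ 2 := by nlinarith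
  have hpos : 0 < 2 * u / (1 - u ^ 2) := by positivity
  have hb : Real.arctan ((1 - r) / (2 * u)) = Real.pi / 2 - 2 * Real.arctan u := by
    have : (1 - r) / (2 * u) = (2 * u / (1 - u ^ 2))⁻¹ := by
      rw [hru]; field_simp
    rw [this, Real.arctan_inv_of_pos hpos, ← Real.two_mul_arctan (by linarith) hu1]
  -- key inequality : 2 * arctan u ≤ π/4 + arctan r
  have hkey : 2 * Real.arctan u ≤ Real.pi / 4 + Real.arctan r := by
    have h1 : Real.pi / 4 + Real.arctan r = Real.arctan ((1 + r) / (1 - r)) := by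
      rw [← Real.arctan_one, Real.arctan_add (by nlinarith)]
      ring_nf
    rw [h1, Real.two_mul_arctan (by linarith) hu1, hru]
    apply Real.arctan_strictMono.monotone
    rw [div_le_div_iff₀ hden (by nlinarith)]
    nlinarith [sq_nonneg (1 - u)]
  rw [ha, hb]
  have h1 : 1 - 2 / Real.pi * (2 * Real.arctan r)
      = (Real.pi - 4 * Real.arctan r) / Real.pi := by field_simp; ring
  have h2 : 4 / Real.pi * (Real.pi / 2 - 2 * Real.arctan u)
      = (2 * Real.pi - 8 * Real.arctan u) / Real.pi := by field_simp; ring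
  rw [h1, h2, div_le_div_iff₀ hπ hπ]
  nlinarith [hkey]
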